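/- Let n ≥ 2k ≥ 4. If F and G are non-trivial, cross-intersecting families of k-subsets of [n], and both F and G are shifted (initial) families, then |F| + |G| ≤ (k+1) + Σ_{i=2}^{k} C(k+1, i)·C(n-k-1, k-i). -/

import Mathlib

/-- The shifting partial order on finite sets of naturals. -/
def prec (A B : Finset ℕ) : Prop :=
  A.card = B.card ∧
    ∀ i < A.card, (A.sort (· ≤ ·)).getD i 0 ≤ (B.sort (· ≤ ·)).getD i 0

/-- A family of k-subsets of [n] is shifted (initial). -/
def IsShifted (n k : ℕ) (F : Finset (Finset ℕ)) : Prop :=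
  ∀ A ∈ (Finset.Icc 1 n).powersetCard k, ∀ B ∈ F, prec A B → A ∈ F

open Finset

theorem list_getD_le_iff : ∀ {l : List ℕ}, l.Pairwise (· < ·) → ∀ i < l.length, ∀ m,
    (l.getD i 0 ≤ m ↔ i < l.countP (· ≤ m)) := by
  intro l
  induction l with
  | nil => intro _ i hi; simp at hi
  | cons x t ih =>
    intro hs i hi m
    have hxt : ∀ y ∈ t, x < y := (List.pairwise_cons.1 hs).1
    have hts : t.Pairwise (· < ·) := (List.pairwise_cons.1 hs).2
    cases i with
    | zero =>
      rw [List.getD_cons_zero, List.countP_cons]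
      constructor
      · intro h; simp [h]
      · intro h
        by_contra hx
        push_neg at hx
        have h0 : t.countP (· ≤ m) = 0 := by
          rw [List.countP_eq_zero]
          intro y hy
          have := hxt y hy
          simp only [decide_eq_true_eq]
          omega
        rw [h0] at h
        simp [Nat.not_le.2 hx] at h
    | succ i =>
      rw [List.getD_cons_succ, List.countP_cons]
      have hi' : i < t.length := by simpa using hi
      rw [ih hts i hi' m]
      by_cases hx : x ≤ m
      · simp [hx]
      · have h0 : t.countP (· ≤ m) = 0 := by
          rw [List.countP_eq_zero]
          intro y hy
          have := hxt y hy
          simp only [decide_eq_true_eq]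
          omega
        rw [h0]
        simp [hx]

theorem card_inter_Iic_eq_countP (A : Finset ℕ) (m : ℕ) :
    (A ∩ Finset.Iic m).card = (A.sort (· ≤ ·)).countP (· ≤ m) := by
  have h1 : A ∩ Finset.Iic m = A.filter (· ≤ m) := by
    ext x; simp [Finset.mem_filter]
  rw [h1]
  have h2 : (A.sort (· ≤ ·) : List ℕ).countP (· ≤ m) = (A.toList).countP (· ≤ m) :=
    (Finset.sort_perm_toList A (· ≤ ·)).countP_eq _
  rw [h2]
  rw [Finset.card_def, Finset.filter_val, ← Multiset.countP_eq_card_filter,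
    ← Finset.coe_toList A, Multiset.coe_countP]

theorem sort_getD_le_iff (A : Finset ℕ) {i : ℕ} (hi : i < A.card) (m : ℕ) :
    (A.sort (· ≤ ·)).getD i 0 ≤ m ↔ i < (A ∩ Finset.Iic m).card := by
  rw [card_inter_Iic_eq_countP]
  exact list_getD_le_iff (Finset.sortedLT_sort A).pairwise i (by rwa [Finset.length_sort]) m

/-- prec from counting -/
theorem prec_of_counts {A B : Finset ℕ} (hcard : A.card = B.card)
    (h : ∀ m, (B ∩ Finset.Iic m).card ≤ (A ∩ Finset.Iic m).card) : prec A B := by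
  refine ⟨hcard, ?_⟩
  intro i hi
  set m := (B.sort (· ≤ ·)).getD i 0 with hm
  have hiB : i < B.card := hcard ▸ hi
  have h1 : i < (B ∩ Finset.Iic m).card := (sort_getD_le_iff B hiB m).1 le_rfl
  exact (sort_getD_le_iff A hi m).2 (lt_of_lt_of_le h1 (h m))


theorem exists_initial_segment (t : ℕ) : ∀ (S : Finset ℕ), t ≤ S.card →
    ∃ A, A ⊆ S ∧ A.card = t ∧ ∀ m, min t (S ∩ Finset.Iic m).card ≤ (A ∩ Finset.Iic m).card := by
  induction t with
  | zero => intro S _; exact ⟨∅, empty_subset _, card_empty, by simp⟩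
  | succ t ih =>
    intro S hS
    obtain ⟨A, hAS, hAc, hAm⟩ := ih S (Nat.le_of_succ_le hS)
    have hne : (S \ A).Nonempty := by
      rw [← Finset.card_pos, Finset.card_sdiff_of_subset hAS]
      omega
    set x := (S \ A).min' hne with hx
    have hxmem : x ∈ S \ A := Finset.min'_mem _ hne
    have hxS : x ∈ S := (Finset.mem_sdiff.1 hxmem).1
    have hxA : x ∉ A := (Finset.mem_sdiff.1 hxmem).2
    refine ⟨insert x A, ?_, ?_, ?_⟩
    · exact Finset.insert_subset hxS hAS
    · rw [Finset.card_insert_of_notMem hxA, hAc]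
    · intro m
      have hmono : (A ∩ Finset.Iic m).card ≤ ((insert x A) ∩ Finset.Iic m).card :=
        Finset.card_le_card (by gcongr; exact Finset.subset_insert x A)
      rcases le_or_gt (S ∩ Finset.Iic m).card t with hc | hc
      · have := hAm m
        omega
      · -- (S ∩ Iic m).card ≥ t+1
        have hAsub : A ⊆ Finset.Iic m := by
          have h1 : (A ∩ Finset.Iic m).card ≥ t := by have := hAm m; omega
          have h2 : A ∩ Finset.Iic m = A := Finset.eq_of_subset_of_card_le
            (Finset.inter_subset_left) (by omega)
          intro a ha
          have : a ∈ A ∩ Finset.Iic m := h2.symm ▸ ha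
          exact (Finset.mem_inter.1 this).2
        have hxm : x ≤ m := by
          have hcard : ¬ ((S ∩ Finset.Iic m) ⊆ A) := by
            intro hsub
            have := Finset.card_le_card hsub
            omega
          obtain ⟨y, hy1, hy2⟩ := Finset.not_subset.1 hcard
          have hy3 : y ∈ S \ A := Finset.mem_sdiff.2 ⟨(Finset.mem_inter.1 hy1).1, hy2⟩
          have := Finset.min'_le _ y hy3
          have := (Finset.mem_inter.1 hy1).2
          rw [Finset.mem_Iic] at this
          omega
        have : insert x A ∩ Finset.Iic m = insert x A := by
          rw [Finset.inter_eq_left]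
          exact Finset.insert_subset (Finset.mem_Iic.2 hxm) hAsub
        rw [this, Finset.card_insert_of_notMem hxA, hAc]
        omega


section
variable (n k : ℕ)

-- helper: splitting count of B at 2c
theorem count_split {B : Finset ℕ} {c u : ℕ} (h2c : 2*c ≤ u) :
    (B ∩ Finset.Icc (2*c+1) u).card = (B ∩ Finset.Iic u).card - (B ∩ Finset.Iic (2*c)).card ∧
    (B ∩ Finset.Iic (2*c)).card ≤ (B ∩ Finset.Iic u).card := by
  have hdisj : Disjoint (B ∩ Finset.Iic (2*c)) (B ∩ Finset.Icc (2*c+1) u) := by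
    rw [Finset.disjoint_left]
    intro a ha hb
    simp only [Finset.mem_inter, Finset.mem_Iic, Finset.mem_Icc] at ha hb
    omega
  have hun : (B ∩ Finset.Iic (2*c)) ∪ (B ∩ Finset.Icc (2*c+1) u) = B ∩ Finset.Iic u := by
    ext a
    simp only [Finset.mem_union, Finset.mem_inter, Finset.mem_Iic, Finset.mem_Icc]
    by_cases hB : a ∈ B <;> simp [hB] <;> omega
  have := Finset.card_union_of_disjoint hdisj
  rw [hun] at this
  omega
end

theorem pair_exists (n k c : ℕ) (hk : 2 ≤ k) (hn : 2*k ≤ n) (hcn : 2*c ≤ n)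
    (B : Finset ℕ) (hB : B ⊆ Finset.Icc 1 n) (hBc : B.card = k)
    (hc : (B ∩ Finset.Iic (2*c)).card = c)
    (hg : ∀ m, 2*c ≤ m → 2 * (B ∩ Finset.Iic m).card ≤ m) :
    ∃ A ∈ (Finset.Icc 1 n).powersetCard k,
      A ∩ ((Finset.Icc 1 (2*c) \ B) ∪ (B \ Finset.Icc 1 (2*c))) = ∅ ∧ prec A B := by
  set S : Finset ℕ := Finset.Icc (2*c+1) n \ B with hS
  have hck : c ≤ k := by
    have : (B ∩ Finset.Iic (2*c)).card ≤ B.card := Finset.card_le_card Finset.inter_subset_left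
    omega
  -- card of S
  have hBn : (B ∩ Finset.Icc (2*c+1) n).card = k - c := by
    have h := count_split (B := B) (c := c) (u := n) hcn
    have : B ∩ Finset.Iic n = B := by
      rw [Finset.inter_eq_left]; intro x hx
      have := hB hx; rw [Finset.mem_Icc] at this; exact Finset.mem_Iic.2 this.2
    rw [this, hBc, hc] at h
    omega
  have hScard : S.card = n - c - k := by
    have hsub : B ∩ Finset.Icc (2*c+1) n ⊆ Finset.Icc (2*c+1) n := Finset.inter_subset_right
    have : S = Finset.Icc (2*c+1) n \ (B ∩ Finset.Icc (2*c+1) n) := by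
      ext x; simp only [hS, Finset.mem_sdiff, Finset.mem_inter]; tauto
    rw [this, Finset.card_sdiff_of_subset hsub, hBn, Nat.card_Icc]
    omega
  have hts : k - c ≤ S.card := by omega
  obtain ⟨A₂, hA₂S, hA₂c, hA₂m⟩ := exists_initial_segment (k - c) S hts
  set A : Finset ℕ := (B ∩ Finset.Iic (2*c)) ∪ A₂ with hA
  have hA₂hi : ∀ x ∈ A₂, 2*c+1 ≤ x ∧ x ≤ n ∧ x ∉ B := by
    intro x hx
    have := hA₂S hx
    simp only [hS, Finset.mem_sdiff, Finset.mem_Icc] at this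
    exact ⟨this.1.1, this.1.2, this.2⟩
  have hdisj : Disjoint (B ∩ Finset.Iic (2*c)) A₂ := by
    rw [Finset.disjoint_left]
    intro a ha hb
    have h1 := (hA₂hi a hb).1
    have h2 := Finset.mem_Iic.1 (Finset.mem_inter.1 ha).2
    omega
  have hAcard : A.card = k := by
    rw [hA, Finset.card_union_of_disjoint hdisj, hc, hA₂c]
    omega
  have hAsub : A ⊆ Finset.Icc 1 n := by
    intro x hx
    rw [hA, Finset.mem_union] at hx
    rcases hx with hx | hx
    · exact hB (Finset.mem_inter.1 hx).1
    · have := hA₂hi x hx; rw [Finset.mem_Icc]; omega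
  refine ⟨A, Finset.mem_powersetCard.2 ⟨hAsub, hAcard⟩, ?_, ?_⟩
  · -- disjointness from B'
    rw [Finset.eq_empty_iff_forall_notMem]
    intro x hx
    obtain ⟨hx1, hx2⟩ := Finset.mem_inter.1 hx
    rw [hA, Finset.mem_union] at hx1
    simp only [Finset.mem_union, Finset.mem_sdiff, Finset.mem_Icc] at hx2
    rcases hx1 with hx1 | hx1
    · simp only [Finset.mem_inter, Finset.mem_Iic] at hx1
      have hx1' : x ∈ B := hx1.1
      have hxge : 1 ≤ x := by have := hB hx1'; rw [Finset.mem_Icc] at this; omega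
      rcases hx2 with h | h
      · exact h.2 hx1'
      · exact h.2 ⟨hxge, hx1.2⟩
    · have := hA₂hi x hx1
      rcases hx2 with h | h
      · omega
      · exact this.2.2 h.1
  · -- prec A B
    apply prec_of_counts (by rw [hAcard, hBc])
    intro m
    have hAm : (A ∩ Finset.Iic m).card
        = ((B ∩ Finset.Iic (2*c)) ∩ Finset.Iic m).card + (A₂ ∩ Finset.Iic m).card := by
      rw [hA, Finset.union_inter_distrib_right]
      apply Finset.card_union_of_disjoint
      exact Finset.disjoint_of_subset_left Finset.inter_subset_left
        (Finset.disjoint_of_subset_right Finset.inter_subset_left hdisj)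
    rcases le_or_gt m (2*c) with hm | hm
    · -- m ≤ 2c
      have : B ∩ Finset.Iic m ⊆ (B ∩ Finset.Iic (2*c)) ∩ Finset.Iic m := by
        intro x hx
        simp only [Finset.mem_inter, Finset.mem_Iic] at hx ⊢
        exact ⟨⟨hx.1, by omega⟩, hx.2⟩
      have := Finset.card_le_card this
      omega
    · -- m > 2c
      have h1 : (B ∩ Finset.Iic (2*c)) ∩ Finset.Iic m = B ∩ Finset.Iic (2*c) := by
        ext x
        simp only [Finset.mem_inter, Finset.mem_Iic]
        by_cases hxB : x ∈ B <;> simp [hxB] <;> omega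
      rw [h1, hc] at hAm
      have h2 := hA₂m m
      -- compute S ∩ Iic m card
      rcases le_or_gt m n with hmn | hmn
      · have hSm : (S ∩ Finset.Iic m).card = m - c - (B ∩ Finset.Iic m).card := by
          have hx : S ∩ Finset.Iic m
              = Finset.Icc (2*c+1) m \ (B ∩ Finset.Icc (2*c+1) m) := by
            ext x
            simp only [hS, Finset.mem_sdiff, Finset.mem_inter, Finset.mem_Icc, Finset.mem_Iic]
            constructor
            · rintro ⟨⟨⟨hx1, hx2⟩, hx3⟩, hx4⟩; exact ⟨⟨hx1, hx4⟩, fun h => hx3 h.1⟩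
            · rintro ⟨⟨hx1, hx2⟩, hx3⟩
              refine ⟨⟨⟨hx1, by omega⟩, fun hB' => hx3 ⟨hB', hx1, hx2⟩⟩, hx2⟩
          have hsub : B ∩ Finset.Icc (2*c+1) m ⊆ Finset.Icc (2*c+1) m := Finset.inter_subset_right
          have hcs := count_split (B := B) (c := c) (u := m) (by omega)
          rw [hx, Finset.card_sdiff_of_subset hsub, Nat.card_Icc, hcs.1, hc]
          have := hcs.2
          omega
        have hgm := hg m (by omega)
        have hcnt : (B ∩ Finset.Iic m).card ≤ k := by
          rw [← hBc]; exact Finset.card_le_card Finset.inter_subset_left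
        rw [hSm] at h2
        omega
      · -- m > n
        have hBm : B ∩ Finset.Iic m = B := by
          rw [Finset.inter_eq_left]; intro x hx
          have := hB hx; rw [Finset.mem_Icc] at this; exact Finset.mem_Iic.2 (by omega)
        have hSmm : S ∩ Finset.Iic m = S := by
          rw [Finset.inter_eq_left]; intro x hx
          have := (Finset.mem_sdiff.1 hx).1; rw [Finset.mem_Icc] at this
          exact Finset.mem_Iic.2 (by omega)
        rw [hBm, hBc]
        rw [hSmm, hScard] at h2
        omega


-- discrete IVT
theorem ivt_zero (n k : ℕ) (B : Finset ℕ) (hB : B ⊆ Finset.Icc 1 n) (hBc : B.card = k)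
    (hn : 2*k ≤ n) :
    ∀ d m, n - m ≤ d → m ≤ 2 * (B ∩ Finset.Iic m).card →
      ∃ j, m ≤ j ∧ j ≤ n ∧ 2 * (B ∩ Finset.Iic j).card = j := by
  have hfull : ∀ m, n ≤ m → B ∩ Finset.Iic m = B := by
    intro m hm
    rw [Finset.inter_eq_left]
    intro x hx
    have := hB hx; rw [Finset.mem_Icc] at this; exact Finset.mem_Iic.2 (by omega)
  intro d
  induction d with
  | zero =>
    intro m hd hm
    have h1 : n ≤ m := by omega
    rw [hfull m h1, hBc] at hm
    refine ⟨n, by omega, le_rfl, ?_⟩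
    rw [hfull n le_rfl, hBc]
    omega
  | succ d ih =>
    intro m hd hm
    rcases le_or_gt n m with h1 | h1
    · rw [hfull m h1, hBc] at hm
      refine ⟨n, by omega, le_rfl, ?_⟩
      rw [hfull n le_rfl, hBc]
      omega
    · rcases eq_or_lt_of_le hm with he | hlt
      · exact ⟨m, le_rfl, by omega, he.symm⟩
      · have hmono : (B ∩ Finset.Iic m).card ≤ (B ∩ Finset.Iic (m+1)).card :=
          Finset.card_le_card (by gcongr; omega)
        obtain ⟨j, hj1, hj2, hj3⟩ := ih (m+1) (by omega) (by omega)
        exact ⟨j, by omega, hj2, hj3⟩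

/-- the largest "balanced" point -/
def rB (n : ℕ) (B : Finset ℕ) : ℕ :=
  Nat.findGreatest (fun j => 2 * (B ∩ Finset.Iic j).card = j) n

theorem inter_Iic_zero {n : ℕ} {B : Finset ℕ} (hB : B ⊆ Finset.Icc 1 n) :
    B ∩ Finset.Iic 0 = ∅ := by
  rw [Finset.eq_empty_iff_forall_notMem]
  intro x hx
  have h1 := hB (Finset.mem_inter.1 hx).1
  have h2 := Finset.mem_Iic.1 (Finset.mem_inter.1 hx).2
  rw [Finset.mem_Icc] at h1
  omega

theorem rB_spec (n : ℕ) (B : Finset ℕ) (hB : B ⊆ Finset.Icc 1 n) :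
    rB n B ≤ n ∧ 2 * (B ∩ Finset.Iic (rB n B)).card = rB n B := by
  constructor
  · exact Nat.findGreatest_le n
  · unfold rB
    exact Nat.findGreatest_spec (P := fun j => 2 * (B ∩ Finset.Iic j).card = j)
      (Nat.zero_le n) (by show 2 * (B ∩ Finset.Iic 0).card = 0; rw [inter_Iic_zero hB]; simp)

theorem rB_max (n : ℕ) (B : Finset ℕ) {j : ℕ} (hj : j ≤ n)
    (hz : 2 * (B ∩ Finset.Iic j).card = j) : j ≤ rB n B :=
  Nat.le_findGreatest (P := fun j => 2 * (B ∩ Finset.Iic j).card = j) hj hz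

theorem rB_above (n k : ℕ) (B : Finset ℕ) (hB : B ⊆ Finset.Icc 1 n) (hBc : B.card = k)
    (hn : 2*k ≤ n) : ∀ m, rB n B ≤ m → 2 * (B ∩ Finset.Iic m).card ≤ m := by
  intro m hm
  by_contra hcon
  push_neg at hcon
  obtain ⟨j, hj1, hj2, hj3⟩ := ivt_zero n k B hB hBc hn (n - m) m le_rfl (by omega)
  have := rB_max n B hj2 hj3
  rcases eq_or_lt_of_le hm with he | hlt
  · rw [← he] at hcon
    have := (rB_spec n B hB).2
    omega
  · omega


def phiB (r : ℕ) (B : Finset ℕ) : Finset ℕ := (Finset.Icc 1 r \ B) ∪ (B \ Finset.Icc 1 r)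

theorem inter_Icc_one {n : ℕ} {B : Finset ℕ} (hB : B ⊆ Finset.Icc 1 n) (m : ℕ) :
    B ∩ Finset.Icc 1 m = B ∩ Finset.Iic m := by
  ext x
  simp only [Finset.mem_inter, Finset.mem_Icc, Finset.mem_Iic]
  constructor
  · rintro ⟨h1, h2⟩; exact ⟨h1, h2.2⟩
  · rintro ⟨h1, h2⟩
    have := hB h1; rw [Finset.mem_Icc] at this
    exact ⟨h1, by omega, h2⟩

theorem phi_disj (c : ℕ) (B : Finset ℕ) :
    Disjoint (Finset.Icc 1 (2*c) \ B) (B \ Finset.Icc 1 (2*c)) := by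
  rw [Finset.disjoint_left]
  intro a ha hb
  exact (Finset.mem_sdiff.1 ha).2 (Finset.mem_sdiff.1 hb).1

theorem card_Icc_sdiff {n c : ℕ} {B : Finset ℕ} (hB : B ⊆ Finset.Icc 1 n)
    (hc : (B ∩ Finset.Iic (2*c)).card = c) :
    (Finset.Icc 1 (2*c) \ B).card = c := by
  have h1 : Finset.Icc 1 (2*c) \ B = Finset.Icc 1 (2*c) \ (Finset.Icc 1 (2*c) ∩ B) := by
    ext x; simp only [Finset.mem_sdiff, Finset.mem_inter]; tauto
  rw [h1, Finset.card_sdiff_of_subset Finset.inter_subset_left, Finset.inter_comm,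
    inter_Icc_one hB, hc, Nat.card_Icc]
  omega

theorem phi_count {n c : ℕ} {B : Finset ℕ} (hB : B ⊆ Finset.Icc 1 n)
    (hc : (B ∩ Finset.Iic (2*c)).card = c) {m : ℕ} (hm : 2*c ≤ m) :
    ((phiB (2*c) B) ∩ Finset.Iic m).card = (B ∩ Finset.Iic m).card := by
  have hsplit := count_split (B := B) (c := c) (u := m) hm
  have h1 : (phiB (2*c) B) ∩ Finset.Iic m
      = (Finset.Icc 1 (2*c) \ B) ∪ (B ∩ Finset.Icc (2*c+1) m) := by
    ext x
    simp only [phiB, Finset.mem_inter, Finset.mem_union, Finset.mem_sdiff, Finset.mem_Icc,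
      Finset.mem_Iic]
    constructor
    · rintro ⟨h | h, hxm⟩
      · exact Or.inl h
      · have := hB h.1; rw [Finset.mem_Icc] at this
        exact Or.inr ⟨h.1, by omega, hxm⟩
    · rintro (h | h)
      · exact ⟨Or.inl h, by omega⟩
      · exact ⟨Or.inr ⟨h.1, by omega⟩, h.2.2⟩
  have hdisj : Disjoint (Finset.Icc 1 (2*c) \ B) (B ∩ Finset.Icc (2*c+1) m) := by
    rw [Finset.disjoint_left]
    intro a ha hb
    exact (Finset.mem_sdiff.1 ha).2 (Finset.mem_inter.1 hb).1
  rw [h1, Finset.card_union_of_disjoint hdisj, card_Icc_sdiff hB hc, hsplit.1]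
  have := hsplit.2
  rw [hc] at this
  omega

theorem phi_card {n k c : ℕ} {B : Finset ℕ} (hB : B ⊆ Finset.Icc 1 n) (hBc : B.card = k)
    (hc : (B ∩ Finset.Iic (2*c)).card = c) : (phiB (2*c) B).card = k := by
  rw [phiB, Finset.card_union_of_disjoint (phi_disj c B), card_Icc_sdiff hB hc]
  have h2 := Finset.card_sdiff_add_card_inter B (Finset.Icc 1 (2*c))
  rw [inter_Icc_one hB, hc, hBc] at h2
  have hck : c ≤ k := by
    rw [← hBc, ← hc]; exact Finset.card_le_card Finset.inter_subset_left
  omega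

theorem phi_subset {n c : ℕ} {B : Finset ℕ} (hB : B ⊆ Finset.Icc 1 n) (hcn : 2*c ≤ n) :
    phiB (2*c) B ⊆ Finset.Icc 1 n := by
  intro x hx
  rw [phiB, Finset.mem_union] at hx
  rcases hx with hx | hx
  · have := (Finset.mem_sdiff.1 hx).1; rw [Finset.mem_Icc] at this ⊢; omega
  · exact hB (Finset.mem_sdiff.1 hx).1

theorem phi_phi (c : ℕ) (B : Finset ℕ) : phiB (2*c) (phiB (2*c) B) = B := by
  ext x
  simp only [phiB, Finset.mem_union, Finset.mem_sdiff, Finset.mem_Icc]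
  by_cases h1 : x ∈ B <;> by_cases h2 : 1 ≤ x ∧ x ≤ 2*c <;> simp [h1, h2]

theorem phi_trace {n k c : ℕ} {B : Finset ℕ} (hB : B ⊆ Finset.Icc 1 n)
    (hc : (B ∩ Finset.Iic (2*c)).card = c)
    (ht2 : 2 ≤ (B ∩ Finset.Icc 1 (k+1)).card) (htk : (B ∩ Finset.Icc 1 (k+1)).card ≤ k-1)
    (hk : 2 ≤ k) :
    2 ≤ ((phiB (2*c) B) ∩ Finset.Icc 1 (k+1)).card ∧
      ((phiB (2*c) B) ∩ Finset.Icc 1 (k+1)).card ≤ k-1 := by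
  rcases le_or_gt (2*c) (k+1) with hck | hck
  · -- 2c ≤ k+1 : trace preserved
    have h1 : (phiB (2*c) B) ∩ Finset.Icc 1 (k+1)
        = (Finset.Icc 1 (2*c) \ B) ∪ (B ∩ Finset.Icc (2*c+1) (k+1)) := by
      ext x
      simp only [phiB, Finset.mem_inter, Finset.mem_union, Finset.mem_sdiff, Finset.mem_Icc]
      constructor
      · rintro ⟨h | h, hx1, hx2⟩
        · exact Or.inl h
        · exact Or.inr ⟨h.1, by omega, hx2⟩
      · rintro (h | h)
        · exact ⟨Or.inl h, by omega⟩
        · exact ⟨Or.inr ⟨h.1, by omega⟩, by omega, h.2.2⟩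
    have hdisj : Disjoint (Finset.Icc 1 (2*c) \ B) (B ∩ Finset.Icc (2*c+1) (k+1)) := by
      rw [Finset.disjoint_left]
      intro a ha hb
      exact (Finset.mem_sdiff.1 ha).2 (Finset.mem_inter.1 hb).1
    have hsplit := count_split (B := B) (c := c) (u := k+1) hck
    rw [← inter_Icc_one hB] at hsplit
    rw [h1, Finset.card_union_of_disjoint hdisj, card_Icc_sdiff hB hc, hsplit.1]
    have h2 := hsplit.2
    rw [hc] at h2
    constructor <;> omega
  · -- 2c > k+1 : trace complemented
    have h1 : (phiB (2*c) B) ∩ Finset.Icc 1 (k+1) = Finset.Icc 1 (k+1) \ B := by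
      ext x
      simp only [phiB, Finset.mem_inter, Finset.mem_union, Finset.mem_sdiff, Finset.mem_Icc]
      constructor
      · rintro ⟨h | h, hx1, hx2⟩
        · exact ⟨⟨hx1, hx2⟩, h.2⟩
        · exact absurd ⟨hx1, by omega⟩ h.2
      · rintro ⟨⟨hx1, hx2⟩, hxB⟩
        exact ⟨Or.inl ⟨⟨hx1, by omega⟩, hxB⟩, hx1, hx2⟩
    have h2 : (Finset.Icc 1 (k+1) \ B).card = (k+1) - (B ∩ Finset.Icc 1 (k+1)).card := by
      have h3 : Finset.Icc 1 (k+1) \ B = Finset.Icc 1 (k+1) \ (Finset.Icc 1 (k+1) ∩ B) := by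
        ext x; simp only [Finset.mem_sdiff, Finset.mem_inter]; tauto
      rw [h3, Finset.card_sdiff_of_subset Finset.inter_subset_left, Finset.inter_comm, Nat.card_Icc]
      omega
    have htk1 : (B ∩ Finset.Icc 1 (k+1)).card ≤ k + 1 := by
      have : (B ∩ Finset.Icc 1 (k+1)).card ≤ (Finset.Icc 1 (k+1)).card :=
        Finset.card_le_card Finset.inter_subset_right
      rw [Nat.card_Icc] at this
      omega
    rw [h1, h2]
    constructor <;> omega


theorem trace_ge_two (n k : ℕ) (hk : 2 ≤ k) (hn : 2*k ≤ n) (F G : Finset (Finset ℕ))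
    (hF : F ⊆ (Finset.Icc 1 n).powersetCard k)
    (hG : G ⊆ (Finset.Icc 1 n).powersetCard k)
    (hsF : IsShifted n k F) (hsG : IsShifted n k G)
    (hcross : ∀ A ∈ F, ∀ B ∈ G, (A ∩ B).Nonempty)
    (hntG : ∀ x : ℕ, ∃ B ∈ G, x ∉ B) :
    ∀ A ∈ F, 2 ≤ (A ∩ Finset.Icc 1 (k+1)).card := by
  have hk1n : k + 1 ≤ n := by omega
  -- K2 = {2,...,k+1} ∈ G
  obtain ⟨B1, hB1G, hB11⟩ := hntG 1
  obtain ⟨hB1sub, hB1card⟩ := Finset.mem_powersetCard.1 (hG hB1G)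
  have hK2P : Finset.Icc 2 (k+1) ∈ (Finset.Icc 1 n).powersetCard k := by
    rw [Finset.mem_powersetCard]
    constructor
    · intro x hx; rw [Finset.mem_Icc] at hx ⊢; omega
    · rw [Nat.card_Icc]; omega
  have hK2G : Finset.Icc 2 (k+1) ∈ G := by
    refine hsG _ hK2P B1 hB1G (prec_of_counts ?_ ?_)
    · rw [hB1card, Nat.card_Icc]; omega
    · intro m
      have h1 : Finset.Icc 2 (k+1) ∩ Finset.Iic m = Finset.Icc 2 (min (k+1) m) := by
        ext x; simp only [Finset.mem_inter, Finset.mem_Icc, Finset.mem_Iic]; omega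
      have h2 : B1 ∩ Finset.Iic m ⊆ Finset.Icc 2 m := by
        intro x hx
        rw [Finset.mem_inter] at hx
        have h3 := hB1sub hx.1
        rw [Finset.mem_Icc] at h3 ⊢
        have : x ≠ 1 := fun h => hB11 (h ▸ hx.1)
        have := Finset.mem_Iic.1 hx.2
        omega
      have h4 := Finset.card_le_card h2
      have h5 : (B1 ∩ Finset.Iic m).card ≤ k := by
        rw [← hB1card]; exact Finset.card_le_card Finset.inter_subset_left
      rw [h1, Nat.card_Icc]
      rw [Nat.card_Icc] at h4
      omega
  -- K1 = {1,...,k} ∈ G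
  have hK1G : Finset.Icc 1 k ∈ G := by
    refine hsG _ ?_ _ hK2G (prec_of_counts ?_ ?_)
    · rw [Finset.mem_powersetCard]
      constructor
      · intro x hx; rw [Finset.mem_Icc] at hx ⊢; omega
      · rw [Nat.card_Icc]; omega
    · rw [Nat.card_Icc, Nat.card_Icc]; omega
    · intro m
      have h1 : Finset.Icc 2 (k+1) ∩ Finset.Iic m = Finset.Icc 2 (min (k+1) m) := by
        ext x; simp only [Finset.mem_inter, Finset.mem_Icc, Finset.mem_Iic]; omega
      have h2 : Finset.Icc 1 k ∩ Finset.Iic m = Finset.Icc 1 (min k m) := by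
        ext x; simp only [Finset.mem_inter, Finset.mem_Icc, Finset.mem_Iic]; omega
      rw [h1, h2, Nat.card_Icc, Nat.card_Icc]
      omega
  -- main argument
  intro A hAF
  obtain ⟨hAsub, hAcard⟩ := Finset.mem_powersetCard.1 (hF hAF)
  by_contra hcon
  push_neg at hcon
  -- A meets K2, inside Icc 1 (k+1)
  obtain ⟨x, hx⟩ := hcross A hAF _ hK2G
  rw [Finset.mem_inter, Finset.mem_Icc] at hx
  have hxA : x ∈ A ∩ Finset.Icc 1 (k+1) := by
    rw [Finset.mem_inter, Finset.mem_Icc]; exact ⟨hx.1, by omega, hx.2.2⟩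
  have ht1 : (A ∩ Finset.Icc 1 (k+1)).card = 1 := by
    have : 1 ≤ (A ∩ Finset.Icc 1 (k+1)).card := Finset.card_pos.2 ⟨x, hxA⟩
    omega
  obtain ⟨j, hj⟩ := Finset.card_eq_one.1 ht1
  have hxj : x = j := by have := hj ▸ hxA; rwa [Finset.mem_singleton] at this
  have hj2 : 2 ≤ j := by omega
  have hjk1 : j ≤ k + 1 := by omega
  have hjA : j ∈ A := by
    have : j ∈ A ∩ Finset.Icc 1 (k+1) := hj ▸ Finset.mem_singleton_self j
    exact (Finset.mem_inter.1 this).1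
  -- A meets K1, so j ≤ k
  have hjk : j ≤ k := by
    obtain ⟨y, hy⟩ := hcross A hAF _ hK1G
    rw [Finset.mem_inter, Finset.mem_Icc] at hy
    have : y ∈ A ∩ Finset.Icc 1 (k+1) := by
      rw [Finset.mem_inter, Finset.mem_Icc]; exact ⟨hy.1, hy.2.1, by omega⟩
    rw [hj, Finset.mem_singleton] at this
    omega
  -- split A
  have hAsplit : ∀ m, A ∩ Finset.Iic m
      = ({j} ∩ Finset.Iic m) ∪ (A ∩ Finset.Icc (k+2) m) := by
    intro m
    ext z
    simp only [Finset.mem_inter, Finset.mem_union, Finset.mem_Iic, Finset.mem_Icc,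
      Finset.mem_singleton]
    constructor
    · rintro ⟨hz1, hz2⟩
      rcases le_or_gt z (k+1) with hz3 | hz3
      · have : z ∈ A ∩ Finset.Icc 1 (k+1) := by
          rw [Finset.mem_inter, Finset.mem_Icc]
          have := hAsub hz1; rw [Finset.mem_Icc] at this
          exact ⟨hz1, by omega, hz3⟩
        rw [hj, Finset.mem_singleton] at this
        exact Or.inl ⟨this, hz2⟩
      · exact Or.inr ⟨hz1, by omega, hz2⟩
    · rintro (⟨hz1, hz2⟩ | ⟨hz1, hz2, hz3⟩)
      · exact ⟨hz1 ▸ hjA, hz2⟩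
      · exact ⟨hz1, hz3⟩
  -- B0 ∈ F
  have hjnotIcc : j ∉ Finset.Icc (k+2) (2*k) := by rw [Finset.mem_Icc]; omega
  have hB0P : insert j (Finset.Icc (k+2) (2*k)) ∈ (Finset.Icc 1 n).powersetCard k := by
    rw [Finset.mem_powersetCard]
    constructor
    · intro z hz
      rw [Finset.mem_insert, Finset.mem_Icc] at hz
      rw [Finset.mem_Icc]
      rcases hz with h | h
      · omega
      · omega
    · rw [Finset.card_insert_of_notMem hjnotIcc, Nat.card_Icc]; omega
  have hB0F : insert j (Finset.Icc (k+2) (2*k)) ∈ F := by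
    refine hsF _ hB0P A hAF (prec_of_counts ?_ ?_)
    · rw [Finset.card_insert_of_notMem hjnotIcc, Nat.card_Icc, hAcard]; omega
    · intro m
      have hB0m : (insert j (Finset.Icc (k+2) (2*k)) ∩ Finset.Iic m).card
          = ({j} ∩ Finset.Iic m).card + (min (2*k) m + 1 - (k+2)) := by
        have h1 : insert j (Finset.Icc (k+2) (2*k)) ∩ Finset.Iic m
            = ({j} ∩ Finset.Iic m) ∪ Finset.Icc (k+2) (min (2*k) m) := by
          ext z
          simp only [Finset.mem_inter, Finset.mem_insert, Finset.mem_union, Finset.mem_Iic,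
            Finset.mem_Icc, Finset.mem_singleton]
          constructor
          · rintro ⟨h | h, hm⟩
            · exact Or.inl ⟨h, hm⟩
            · exact Or.inr ⟨h.1, by omega⟩
          · rintro (⟨h1, h2⟩ | h)
            · exact ⟨Or.inl h1, h2⟩
            · exact ⟨Or.inr ⟨h.1, by omega⟩, by omega⟩
        have h2 : Disjoint ({j} ∩ Finset.Iic m) (Finset.Icc (k+2) (min (2*k) m)) := by
          rw [Finset.disjoint_left]
          intro a ha hb
          rw [Finset.mem_inter, Finset.mem_singleton] at ha
          rw [Finset.mem_Icc] at hb
          omega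
        rw [h1, Finset.card_union_of_disjoint h2, Nat.card_Icc]
      have hAm : (A ∩ Finset.Iic m).card
          = ({j} ∩ Finset.Iic m).card + (A ∩ Finset.Icc (k+2) m).card := by
        rw [hAsplit m]
        apply Finset.card_union_of_disjoint
        rw [Finset.disjoint_left]
        intro a ha hb
        rw [Finset.mem_inter, Finset.mem_singleton] at ha
        rw [Finset.mem_inter, Finset.mem_Icc] at hb
        omega
      have hb1 : (A ∩ Finset.Icc (k+2) m).card ≤ m + 1 - (k+2) := by
        have : (A ∩ Finset.Icc (k+2) m).card ≤ (Finset.Icc (k+2) m).card :=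
          Finset.card_le_card Finset.inter_subset_right
        rwa [Nat.card_Icc] at this
      have hb2 : (A ∩ Finset.Icc (k+2) m).card ≤ k - 1 := by
        have hsub : A ∩ Finset.Icc (k+2) m ⊆ A.erase j := by
          intro z hz
          rw [Finset.mem_inter, Finset.mem_Icc] at hz
          rw [Finset.mem_erase]
          exact ⟨by omega, hz.1⟩
        have := Finset.card_le_card hsub
        rwa [Finset.card_erase_of_mem hjA, hAcard] at this
      rw [hB0m, hAm]
      omega
  -- C0 ∈ G
  have hjIcc : j ∈ Finset.Icc 1 (k+1) := by rw [Finset.mem_Icc]; omega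
  have hC0P : Finset.Icc 1 (k+1) \ {j} ∈ (Finset.Icc 1 n).powersetCard k := by
    rw [Finset.mem_powersetCard]
    constructor
    · intro z hz
      have := (Finset.mem_sdiff.1 hz).1
      rw [Finset.mem_Icc] at this ⊢; omega
    · rw [Finset.card_sdiff_of_subset (Finset.singleton_subset_iff.2 hjIcc), Nat.card_Icc,
        Finset.card_singleton]
      omega
  have hC0G : Finset.Icc 1 (k+1) \ {j} ∈ G := by
    refine hsG _ hC0P _ hK2G (prec_of_counts ?_ ?_)
    · rw [Finset.card_sdiff_of_subset (Finset.singleton_subset_iff.2 hjIcc), Nat.card_Icc,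
        Finset.card_singleton, Nat.card_Icc]
      omega
    · intro m
      have h1 : Finset.Icc 2 (k+1) ∩ Finset.Iic m = Finset.Icc 2 (min (k+1) m) := by
        ext z; simp only [Finset.mem_inter, Finset.mem_Icc, Finset.mem_Iic]; omega
      rcases le_or_gt j m with hjm | hjm
      · have h2 : (Finset.Icc 1 (k+1) \ {j}) ∩ Finset.Iic m
            = Finset.Icc 1 (min (k+1) m) \ {j} := by
          ext z
          simp only [Finset.mem_inter, Finset.mem_sdiff, Finset.mem_Icc, Finset.mem_Iic,
            Finset.mem_singleton]
          constructor
          · rintro ⟨⟨h3, h4⟩, h5⟩; exact ⟨⟨h3.1, by omega⟩, h4⟩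
          · rintro ⟨⟨h3, h4⟩, h5⟩; exact ⟨⟨⟨h3, by omega⟩, h5⟩, by omega⟩
        have hjm2 : j ∈ Finset.Icc 1 (min (k+1) m) := by rw [Finset.mem_Icc]; omega
        rw [h1, h2, Finset.card_sdiff_of_subset (Finset.singleton_subset_iff.2 hjm2), Nat.card_Icc,
          Nat.card_Icc, Finset.card_singleton]
        omega
      · have h2 : (Finset.Icc 1 (k+1) \ {j}) ∩ Finset.Iic m = Finset.Icc 1 (min (k+1) m) := by
          ext z
          simp only [Finset.mem_inter, Finset.mem_sdiff, Finset.mem_Icc, Finset.mem_Iic,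
            Finset.mem_singleton]
          constructor
          · rintro ⟨⟨h3, h4⟩, h5⟩; exact ⟨h3.1, by omega⟩
          · rintro ⟨h3, h4⟩; exact ⟨⟨⟨h3, by omega⟩, by omega⟩, by omega⟩
        rw [h1, h2, Nat.card_Icc, Nat.card_Icc]
        omega
  -- contradiction
  obtain ⟨z, hz⟩ := hcross _ hB0F _ hC0G
  have h1 := Finset.mem_inter.1 hz
  have h2 := Finset.mem_insert.1 h1.1
  have h3 := Finset.mem_sdiff.1 h1.2
  have h4 := Finset.mem_Icc.1 h3.1
  rcases h2 with h | h
  · exact h3.2 (Finset.mem_singleton.2 h)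
  · have := Finset.mem_Icc.1 h
    omega


theorem fiber_card (n k i : ℕ) (hk1n : k + 1 ≤ n) (hik : i ≤ k) :
    (((Finset.Icc 1 n).powersetCard k).filter
        (fun A => (A ∩ Finset.Icc 1 (k+1)).card = i)).card
      = (k+1).choose i * (n-k-1).choose (k-i) := by
  have split_mem : ∀ A : Finset ℕ, A ⊆ Finset.Icc 1 n →
      (A ∩ Finset.Icc 1 (k+1)) ∪ (A ∩ Finset.Icc (k+2) n) = A := by
    intro A hsub
    ext x
    simp only [Finset.mem_union, Finset.mem_inter, Finset.mem_Icc]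
    constructor
    · rintro (h | h) <;> exact h.1
    · intro hx
      have := Finset.mem_Icc.1 (hsub hx)
      by_cases hxk : x ≤ k + 1
      · exact Or.inl ⟨hx, by omega⟩
      · exact Or.inr ⟨hx, by omega⟩
  have un_tr1 : ∀ p : Finset ℕ × Finset ℕ, p.1 ⊆ Finset.Icc 1 (k+1) →
      p.2 ⊆ Finset.Icc (k+2) n → (p.1 ∪ p.2) ∩ Finset.Icc 1 (k+1) = p.1 := by
    intro p h1s h2s
    ext x
    simp only [Finset.mem_inter, Finset.mem_union, Finset.mem_Icc]
    constructor
    · rintro ⟨h | h, hx⟩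
      · exact h
      · have := Finset.mem_Icc.1 (h2s h); omega
    · intro hx
      have := Finset.mem_Icc.1 (h1s hx)
      exact ⟨Or.inl hx, this⟩
  have key : (((Finset.Icc 1 n).powersetCard k).filter
        (fun A => (A ∩ Finset.Icc 1 (k+1)).card = i)).card
      = (((Finset.Icc 1 (k+1)).powersetCard i) ×ˢ
          ((Finset.Icc (k+2) n).powersetCard (k-i))).card := by
    apply Finset.card_bij' (fun A _ => (A ∩ Finset.Icc 1 (k+1), A ∩ Finset.Icc (k+2) n))
      (fun p _ => p.1 ∪ p.2)
    · intro A hA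
      rw [Finset.mem_filter, Finset.mem_powersetCard] at hA
      obtain ⟨⟨hsub, hcard⟩, htr⟩ := hA
      rw [Finset.mem_product]
      dsimp only
      rw [Finset.mem_powersetCard, Finset.mem_powersetCard]
      refine ⟨⟨Finset.inter_subset_right, htr⟩, Finset.inter_subset_right, ?_⟩
      have hdisj : Disjoint (A ∩ Finset.Icc 1 (k+1)) (A ∩ Finset.Icc (k+2) n) := by
        rw [Finset.disjoint_left]
        intro a ha hb
        have h1 := Finset.mem_Icc.1 (Finset.mem_inter.1 ha).2
        have h2 := Finset.mem_Icc.1 (Finset.mem_inter.1 hb).2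
        omega
      have hcu := Finset.card_union_of_disjoint hdisj
      rw [split_mem A hsub, hcard, htr] at hcu
      omega
    · intro p hp
      rw [Finset.mem_product, Finset.mem_powersetCard, Finset.mem_powersetCard] at hp
      obtain ⟨⟨h1s, h1c⟩, h2s, h2c⟩ := hp
      rw [Finset.mem_filter, Finset.mem_powersetCard]
      have hdisj : Disjoint p.1 p.2 := by
        rw [Finset.disjoint_left]
        intro a ha hb
        have h1 := Finset.mem_Icc.1 (h1s ha)
        have h2 := Finset.mem_Icc.1 (h2s hb)
        omega
      refine ⟨⟨?_, ?_⟩, by rw [un_tr1 p h1s h2s, h1c]⟩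
      · intro x hx
        rcases Finset.mem_union.1 hx with h | h
        · have := Finset.mem_Icc.1 (h1s h); rw [Finset.mem_Icc]; omega
        · have := Finset.mem_Icc.1 (h2s h); rw [Finset.mem_Icc]; omega
      · rw [Finset.card_union_of_disjoint hdisj, h1c, h2c]; omega
    · intro A hA
      dsimp only
      rw [Finset.mem_filter, Finset.mem_powersetCard] at hA
      exact split_mem A hA.1.1
    · intro p hp
      rw [Finset.mem_product, Finset.mem_powersetCard, Finset.mem_powersetCard] at hp
      obtain ⟨⟨h1s, h1c⟩, h2s, h2c⟩ := hp
      have htr2 : (p.1 ∪ p.2) ∩ Finset.Icc (k+2) n = p.2 := by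
        ext x
        simp only [Finset.mem_inter, Finset.mem_union, Finset.mem_Icc]
        constructor
        · rintro ⟨h | h, hx⟩
          · have := Finset.mem_Icc.1 (h1s h); omega
          · exact h
        · intro hx
          have := Finset.mem_Icc.1 (h2s hx)
          exact ⟨Or.inr hx, this⟩
      have : ((p.1 ∪ p.2) ∩ Finset.Icc 1 (k+1), (p.1 ∪ p.2) ∩ Finset.Icc (k+2) n) = p := by
        rw [un_tr1 p h1s h2s, htr2]
      exact this
  rw [key, Finset.card_product, Finset.card_powersetCard, Finset.card_powersetCard,
    Nat.card_Icc, Nat.card_Icc]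
  congr 2
  omega

theorem H_card (n k : ℕ) (hk : 2 ≤ k) (hn : 2*k ≤ n) :
    (((Finset.Icc 1 n).powersetCard k).filter
        (fun A => 2 ≤ (A ∩ Finset.Icc 1 (k+1)).card)).card
      = ∑ i ∈ Finset.Icc 2 k, (k + 1).choose i * (n - k - 1).choose (k - i) := by
  set H := ((Finset.Icc 1 n).powersetCard k).filter
    (fun A => 2 ≤ (A ∩ Finset.Icc 1 (k+1)).card) with hH
  rw [Finset.card_eq_sum_card_fiberwise
    (f := fun A => (A ∩ Finset.Icc 1 (k+1)).card) (t := Finset.Icc 2 k) ?_]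
  · apply Finset.sum_congr rfl
    intro i hi
    rw [Finset.mem_Icc] at hi
    rw [← fiber_card n k i (by omega) hi.2]
    congr 1
    ext A
    simp only [hH, Finset.mem_filter, Finset.mem_powersetCard]
    constructor
    · rintro ⟨⟨h1, h2⟩, h3⟩; exact ⟨h1, h3⟩
    · rintro ⟨h1, h2⟩; exact ⟨⟨h1, by omega⟩, h2⟩
  · intro A hA
    rw [hH, Finset.mem_coe, Finset.mem_filter, Finset.mem_powersetCard] at hA
    have h5 : (A ∩ Finset.Icc 1 (k+1)).card ≤ A.card :=
      Finset.card_le_card Finset.inter_subset_left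
    have h6 := hA.1.2
    simp only [Finset.mem_coe, Finset.mem_Icc]
    omega


theorem not_sub_of_trace {k : ℕ} {B : Finset ℕ} (hk : 2 ≤ k) (hBcard : B.card = k)
    (htk : (B ∩ Finset.Icc 1 (k+1)).card ≤ k - 1) : ¬ B ⊆ Finset.Icc 1 (k+1) := by
  intro hsub
  have : B ∩ Finset.Icc 1 (k+1) = B := Finset.inter_eq_left.2 hsub
  rw [this, hBcard] at htk
  omega

theorem phi_main (n k : ℕ) (hk : 2 ≤ k) (hn : 2*k ≤ n) (B : Finset ℕ)
    (hBsub : B ⊆ Finset.Icc 1 n) (hBcard : B.card = k)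
    (ht2 : 2 ≤ (B ∩ Finset.Icc 1 (k+1)).card)
    (htk : (B ∩ Finset.Icc 1 (k+1)).card ≤ k - 1) :
    phiB (rB n B) B ⊆ Finset.Icc 1 n ∧ (phiB (rB n B) B).card = k ∧
    2 ≤ ((phiB (rB n B) B) ∩ Finset.Icc 1 (k+1)).card ∧
    ((phiB (rB n B) B) ∩ Finset.Icc 1 (k+1)).card ≤ k-1 ∧
    phiB (rB n (phiB (rB n B) B)) (phiB (rB n B) B) = B ∧
    (∃ A ∈ (Finset.Icc 1 n).powersetCard k, A ∩ (phiB (rB n B) B) = ∅ ∧ prec A B) ∧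
    (∃ A ∈ (Finset.Icc 1 n).powersetCard k, A ∩ B = ∅ ∧ prec A (phiB (rB n B) B)) := by
  obtain ⟨hrn, hr2⟩ := rB_spec n B hBsub
  set c := (B ∩ Finset.Iic (rB n B)).card with hcdef
  have hrc : rB n B = 2*c := by omega
  have hc : (B ∩ Finset.Iic (2*c)).card = c := by rw [← hrc]
  have hcn : 2*c ≤ n := by omega
  have hg : ∀ m, 2*c ≤ m → 2 * (B ∩ Finset.Iic m).card ≤ m := by
    intro m hm
    exact rB_above n k B hBsub hBcard hn m (by omega)
  rw [hrc]
  have hφsub : phiB (2*c) B ⊆ Finset.Icc 1 n := phi_subset hBsub hcn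
  have hφcard : (phiB (2*c) B).card = k := phi_card hBsub hBcard hc
  have hφtr := phi_trace hBsub hc ht2 htk hk
  have hcφ : ((phiB (2*c) B) ∩ Finset.Iic (2*c)).card = c := by
    rw [phi_count hBsub hc le_rfl, hc]
  have hgφ : ∀ m, 2*c ≤ m → 2 * ((phiB (2*c) B) ∩ Finset.Iic m).card ≤ m := by
    intro m hm
    rw [phi_count hBsub hc hm]
    exact hg m hm
  have hrφ : rB n (phiB (2*c) B) = 2*c := by
    apply le_antisymm
    · by_contra hcon
      push_neg at hcon
      obtain ⟨hr'n, hr'2⟩ := rB_spec n (phiB (2*c) B) hφsub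
      rw [phi_count hBsub hc (by omega)] at hr'2
      have := rB_max n B hr'n hr'2
      omega
    · exact rB_max n (phiB (2*c) B) hcn (by rw [hcφ])
  refine ⟨hφsub, hφcard, hφtr.1, hφtr.2, ?_, ?_, ?_⟩
  · rw [hrφ, phi_phi]
  · obtain ⟨A, hA1, hA2, hA3⟩ := pair_exists n k c hk hn hcn B hBsub hBcard hc hg
    exact ⟨A, hA1, hA2, hA3⟩
  · obtain ⟨A, hA1, hA2, hA3⟩ :=
      pair_exists n k c hk hn hcn (phiB (2*c) B) hφsub hφcard hcφ hgφ
    refine ⟨A, hA1, ?_, hA3⟩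
    have : (Finset.Icc 1 (2*c) \ (phiB (2*c) B)) ∪ ((phiB (2*c) B) \ Finset.Icc 1 (2*c))
        = B := phi_phi c B
    rwa [this] at hA2


/-- Maximum of |F| + |G| for non-trivial cross-intersecting initial families. -/
theorem stmt4 (n k : ℕ) (hk : 2 ≤ k) (hn : 2 * k ≤ n)
    (F G : Finset (Finset ℕ))
    (hF : F ⊆ (Finset.Icc 1 n).powersetCard k)
    (hG : G ⊆ (Finset.Icc 1 n).powersetCard k)
    (hsF : IsShifted n k F) (hsG : IsShifted n k G)
    (hcross : ∀ A ∈ F, ∀ B ∈ G, (A ∩ B).Nonempty)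
    (hntF : ∀ x : ℕ, ∃ A ∈ F, x ∉ A)
    (hntG : ∀ x : ℕ, ∃ B ∈ G, x ∉ B) :
    F.card + G.card ≤
      (k + 1) + ∑ i ∈ Finset.Icc 2 k, (k + 1).choose i * (n - k - 1).choose (k - i) := by
  classical
  set H := ((Finset.Icc 1 n).powersetCard k).filter
    (fun A => 2 ≤ (A ∩ Finset.Icc 1 (k+1)).card) with hH
  have hcross' : ∀ B ∈ G, ∀ A ∈ F, (B ∩ A).Nonempty := by
    intro B hB A hA
    rw [Finset.inter_comm]
    exact hcross A hA B hB
  have hFH : F ⊆ H := by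
    intro A hA
    rw [hH, Finset.mem_filter]
    exact ⟨hF hA, trace_ge_two n k hk hn F G hF hG hsF hsG hcross hntG A hA⟩
  have hGH : G ⊆ H := by
    intro A hA
    rw [hH, Finset.mem_filter]
    exact ⟨hG hA, trace_ge_two n k hk hn G F hG hF hsG hsF hcross' hntF A hA⟩
  set fval : Finset ℕ → ℕ :=
    fun B => (if B ∈ F then 1 else 0) + (if B ∈ G then 1 else 0) with hfval
  set wval : Finset ℕ → ℕ :=
    fun B => 1 + (if B ⊆ Finset.Icc 1 (k+1) then 1 else 0) with hwval
  set Φ : Finset ℕ → Finset ℕ :=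
    fun B => if B ⊆ Finset.Icc 1 (k+1) then B else phiB (rB n B) B with hΦ
  -- facts about membership in H
  have hHfacts : ∀ B ∈ H, B ⊆ Finset.Icc 1 n ∧ B.card = k ∧
      2 ≤ (B ∩ Finset.Icc 1 (k+1)).card := by
    intro B hB
    rw [hH, Finset.mem_filter, Finset.mem_powersetCard] at hB
    exact ⟨hB.1.1, hB.1.2, hB.2⟩
  have htk_of : ∀ B ∈ H, ¬ B ⊆ Finset.Icc 1 (k+1) → (B ∩ Finset.Icc 1 (k+1)).card ≤ k - 1 := by
    intro B hB hnsub
    obtain ⟨hBsub, hBcard, ht2⟩ := hHfacts B hB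
    have h1 : (B ∩ Finset.Icc 1 (k+1)).card ≤ k := by
      rw [← hBcard]; exact Finset.card_le_card Finset.inter_subset_left
    rcases Nat.lt_or_ge (B ∩ Finset.Icc 1 (k+1)).card k with h | h
    · omega
    · exfalso
      have heq : B ∩ Finset.Icc 1 (k+1) = B :=
        Finset.eq_of_subset_of_card_le Finset.inter_subset_left (by omega)
      exact hnsub (by rw [← heq]; exact Finset.inter_subset_right)
  -- Φ maps H to H and is an involution on H
  have hΦmem : ∀ B ∈ H, Φ B ∈ H := by
    intro B hB
    rw [hΦ]
    dsimp only
    by_cases hsub : B ⊆ Finset.Icc 1 (k+1)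
    · rw [if_pos hsub]; exact hB
    · rw [if_neg hsub]
      obtain ⟨hBsub, hBcard, ht2⟩ := hHfacts B hB
      obtain ⟨h1, h2, h3, _, _, _, _⟩ :=
        phi_main n k hk hn B hBsub hBcard ht2 (htk_of B hB hsub)
      rw [hH, Finset.mem_filter, Finset.mem_powersetCard]
      exact ⟨⟨h1, h2⟩, h3⟩
  have hΦinv : ∀ B ∈ H, Φ (Φ B) = B := by
    intro B hB
    rw [hΦ]
    dsimp only
    by_cases hsub : B ⊆ Finset.Icc 1 (k+1)
    · rw [if_pos hsub, if_pos hsub]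
    · rw [if_neg hsub]
      obtain ⟨hBsub, hBcard, ht2⟩ := hHfacts B hB
      obtain ⟨h1, h2, h3, h4, h5, _, _⟩ :=
        phi_main n k hk hn B hBsub hBcard ht2 (htk_of B hB hsub)
      rw [if_neg (not_sub_of_trace hk h2 h4), h5]
  -- pointwise bound
  have hpoint : ∀ B ∈ H, fval B + fval (Φ B) ≤ wval B + wval (Φ B) := by
    intro B hB
    by_cases hsub : B ⊆ Finset.Icc 1 (k+1)
    · have hΦB : Φ B = B := by rw [hΦ]; dsimp only; rw [if_pos hsub]
      rw [hΦB, hfval, hwval]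
      dsimp only
      rw [if_pos hsub]
      by_cases h1 : B ∈ F <;> by_cases h2 : B ∈ G <;> simp [h1, h2]
    · have hΦB : Φ B = phiB (rB n B) B := by rw [hΦ]; dsimp only; rw [if_neg hsub]
      obtain ⟨hBsub, hBcard, ht2⟩ := hHfacts B hB
      obtain ⟨h1, h2, h3, h4, h5, ⟨A1, hA1P, hA1d, hA1p⟩, ⟨A2, hA2P, hA2d, hA2p⟩⟩ :=
        phi_main n k hk hn B hBsub hBcard ht2 (htk_of B hB hsub)
      rw [hΦB]
      set ψ := phiB (rB n B) B with hψ
      have hnsubψ : ¬ ψ ⊆ Finset.Icc 1 (k+1) := not_sub_of_trace hk h2 h4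
      -- exclusions
      have ex1 : B ∈ F → ψ ∉ G := by
        intro hBF hψG
        have hA1F : A1 ∈ F := hsF A1 hA1P B hBF hA1p
        obtain ⟨x, hx⟩ := hcross A1 hA1F ψ hψG
        rw [hA1d] at hx
        exact absurd hx (Finset.notMem_empty x)
      have ex2 : B ∈ G → ψ ∉ F := by
        intro hBG hψF
        have hA1G : A1 ∈ G := hsG A1 hA1P B hBG hA1p
        obtain ⟨x, hx⟩ := hcross ψ hψF A1 hA1G
        rw [Finset.inter_comm, hA1d] at hx
        exact absurd hx (Finset.notMem_empty x)
      have ex3 : ψ ∈ F → B ∉ G := by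
        intro hψF hBG
        have hA2F : A2 ∈ F := hsF A2 hA2P ψ hψF hA2p
        obtain ⟨x, hx⟩ := hcross A2 hA2F B hBG
        rw [hA2d] at hx
        exact absurd hx (Finset.notMem_empty x)
      have ex4 : ψ ∈ G → B ∉ F := by
        intro hψG hBF
        have hA2G : A2 ∈ G := hsG A2 hA2P ψ hψG hA2p
        obtain ⟨x, hx⟩ := hcross B hBF A2 hA2G
        rw [Finset.inter_comm, hA2d] at hx
        exact absurd hx (Finset.notMem_empty x)
      rw [hfval, hwval]
      dsimp only
      rw [if_neg hsub, if_neg hnsubψ]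
      by_cases hBF : B ∈ F <;> by_cases hBG : B ∈ G <;>
        by_cases hψF : ψ ∈ F <;> by_cases hψG : ψ ∈ G <;>
          simp [hBF, hBG, hψF, hψG] at ex1 ex2 ex3 ex4 ⊢
  -- sum manipulation
  have hsumf : ∑ B ∈ H, fval (Φ B) = ∑ B ∈ H, fval B := by
    apply Finset.sum_bij' (fun B _ => Φ B) (fun B _ => Φ B) hΦmem hΦmem hΦinv hΦinv
    intro B hB
    rfl
  have hsumw : ∑ B ∈ H, wval (Φ B) = ∑ B ∈ H, wval B := by
    apply Finset.sum_bij' (fun B _ => Φ B) (fun B _ => Φ B) hΦmem hΦmem hΦinv hΦinv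
    intro B hB
    rfl
  have hdouble : 2 * (∑ B ∈ H, fval B) ≤ 2 * (∑ B ∈ H, wval B) := by
    have h1 : ∑ B ∈ H, (fval B + fval (Φ B)) ≤ ∑ B ∈ H, (wval B + wval (Φ B)) :=
      Finset.sum_le_sum hpoint
    have e1 : ∑ B ∈ H, (fval B + fval (Φ B))
        = (∑ B ∈ H, fval B) + ∑ B ∈ H, fval (Φ B) := Finset.sum_add_distrib
    have e2 : ∑ B ∈ H, (wval B + wval (Φ B))
        = (∑ B ∈ H, wval B) + ∑ B ∈ H, wval (Φ B) := Finset.sum_add_distrib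
    rw [e1, e2, hsumf, hsumw] at h1
    omega
  -- evaluate sums
  have hcount : ∀ T : Finset (Finset ℕ), T ⊆ H →
      ∑ B ∈ H, (if B ∈ T then 1 else 0) = T.card := by
    intro T hT
    rw [← Finset.card_filter]
    congr 1
    ext B
    rw [Finset.mem_filter]
    constructor
    · exact fun h => h.2
    · exact fun h => ⟨hT h, h⟩
  have hsumf2 : ∑ B ∈ H, fval B = F.card + G.card := by
    rw [hfval]
    dsimp only
    rw [Finset.sum_add_distrib, hcount F hFH, hcount G hGH]
  have hsub_card : (H.filter (fun B => B ⊆ Finset.Icc 1 (k+1))).card = k + 1 := by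
    have heq : H.filter (fun B => B ⊆ Finset.Icc 1 (k+1))
        = (Finset.Icc 1 (k+1)).powersetCard k := by
      ext B
      rw [Finset.mem_filter, hH, Finset.mem_filter, Finset.mem_powersetCard,
        Finset.mem_powersetCard]
      constructor
      · rintro ⟨⟨⟨_, h2⟩, _⟩, h4⟩; exact ⟨h4, h2⟩
      · rintro ⟨h1, h2⟩
        have htr : B ∩ Finset.Icc 1 (k+1) = B := Finset.inter_eq_left.2 h1
        refine ⟨⟨⟨fun x hx => ?_, h2⟩, ?_⟩, h1⟩
        · have := Finset.mem_Icc.1 (h1 hx)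
          rw [Finset.mem_Icc]
          omega
        · rw [htr, h2]
          omega
    rw [heq, Finset.card_powersetCard, Nat.card_Icc]
    have : k + 1 + 1 - 1 = k + 1 := by omega
    rw [this, Nat.choose_succ_self_right k]
  have hsumw2 : ∑ B ∈ H, wval B = H.card + (k+1) := by
    rw [hwval]
    dsimp only
    rw [Finset.sum_add_distrib, ← Finset.card_filter]
    simp only [Finset.sum_const, smul_eq_mul, mul_one]
    rw [hsub_card]
  have hHcard := H_card n k hk hn
  rw [hsumf2, hsumw2] at hdouble
  rw [hH] at *
  omega
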